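/- Let y > 1 and β ≥ 0. For all u ∈ (0,1), H(u) + H(1-u) < H(1), where H(u) = 1 / (y^(β/u) * (y^(1/u) - 1)). -/

import Mathlib

open Real

lemma key1 (y : ℝ) (hy : 1 < y) (c : ℝ) (hc : 1 ≤ c) :
    (y - 1)^2 < y * ((y ^ c - 1) * (y ^ (1/c) - 1)) := by
  have hy0 : (0:ℝ) < y := by linarith
  have hc0 : (0:ℝ) < c := by linarith
  have h1 : 1 + c * (y - 1) ≤ y ^ c := by
    have := one_add_mul_self_le_rpow_one_add (s := y - 1) (by linarith) hc
    simpa using this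
  have hz0 : (0:ℝ) < y ^ (-(1/c)) := Real.rpow_pos_of_pos hy0 _
  have hpow : (y ^ (-(1/c))) ^ c = y⁻¹ := by
    rw [← Real.rpow_mul hy0.le]
    rw [show -(1/c) * c = -1 by field_simp, Real.rpow_neg_one]
  have h2 : 1 + c * (y ^ (-(1/c)) - 1) ≤ y⁻¹ := by
    have := one_add_mul_self_le_rpow_one_add (s := y ^ (-(1/c)) - 1) (by linarith) hc
    rw [show (1 : ℝ) + (y ^ (-(1/c)) - 1) = y ^ (-(1/c)) by ring, hpow] at this
    exact this
  have hlt1 : y ^ (-(1/c)) < 1 := by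
    have : (0:ℝ) < 1/c := by positivity
    exact Real.rpow_lt_one_of_one_lt_of_neg hy (by linarith)
  have hgt1 : 1 < y ^ (1/c) := by
    have : (0:ℝ) < 1/c := by positivity
    exact Real.one_lt_rpow_iff_of_pos hy0 |>.2 (Or.inl ⟨hy, this⟩)
  have hinv : y ^ (-(1/c)) = (y ^ (1/c))⁻¹ := by
    rw [Real.rpow_neg hy0.le]
  -- 1 - y^(-(1/c)) = (y^(1/c) - 1) / y^(1/c) < y^(1/c) - 1
  have h3 : 1 - y ^ (-(1/c)) < y ^ (1/c) - 1 := by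
    have hA : (0:ℝ) < y ^ (1/c) := Real.rpow_pos_of_pos hy0 _
    have hkey : y ^ (-(1/c)) * y ^ (1/c) = 1 := by
      rw [hinv]; exact inv_mul_cancel₀ hA.ne'
    nlinarith [mul_pos (sub_pos.2 hlt1) (sub_pos.2 hgt1)]
  -- c * (y^(1/c) - 1) > (y-1)/y
  have h4 : (y - 1) / y < c * (y ^ (1/c) - 1) := by
    have h2' : 1 - y⁻¹ ≤ c * (1 - y ^ (-(1/c))) := by linarith
    have : (y-1)/y = 1 - y⁻¹ := by field_simp
    rw [this]
    calc 1 - y⁻¹ ≤ c * (1 - y ^ (-(1/c))) := h2'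
      _ < c * (y ^ (1/c) - 1) := by
          apply mul_lt_mul_of_pos_left h3 hc0
  have h5 : c * (y - 1) ≤ y ^ c - 1 := by linarith
  have hy1 : (0:ℝ) < y - 1 := by linarith
  have h6 : (0:ℝ) < y ^ (1/c) - 1 := by linarith
  -- combine
  have h7 : (y-1) * ((y-1)/y) < (y ^ c - 1) * (y ^ (1/c) - 1) := by
    calc (y-1) * ((y-1)/y) < (y-1) * (c * (y ^ (1/c) - 1)) :=
          mul_lt_mul_of_pos_left h4 hy1
      _ = (c * (y-1)) * (y ^ (1/c) - 1) := by ring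
      _ ≤ (y ^ c - 1) * (y ^ (1/c) - 1) := mul_le_mul_of_nonneg_right h5 h6.le
  have := mul_lt_mul_of_pos_left h7 hy0
  calc (y-1)^2 = y * ((y-1) * ((y-1)/y)) := by field_simp
    _ < y * ((y ^ c - 1) * (y ^ (1/c) - 1)) := this

lemma key2 (y : ℝ) (hy : 1 < y) (a b : ℝ) (ha : 1 < a) (hb : 1 < b)
    (hab : a + b = a * b) :
    1 / (y ^ a - 1) + 1 / (y ^ b - 1) < 1 / (y - 1) := by
  have hy0 : (0:ℝ) < y := by linarith
  have ha1 : (0:ℝ) < a - 1 := by linarith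
  have hb1 : (0:ℝ) < b - 1 := by linarith
  have hrecip : b - 1 = 1 / (a - 1) := by
    field_simp
    nlinarith [hab]
  have hprod : (y - 1)^2 < y * ((y ^ (a-1) - 1) * (y ^ (b-1) - 1)) := by
    rcases le_or_gt 1 (a - 1) with h | h
    · have := key1 y hy (a-1) h
      rwa [← hrecip] at this
    · have hge : 1 ≤ b - 1 := by
        rw [hrecip]; rw [le_div_iff₀ ha1]; nlinarith
      have := key1 y hy (b-1) hge
      have h1c : 1 / (b-1) = a - 1 := by
        rw [hrecip]; field_simp
      rw [h1c] at this
      linarith [this, mul_comm (y ^ (a-1) - 1) (y ^ (b-1) - 1)]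
  set A := y ^ (a-1) with hA
  set B := y ^ (b-1) with hB
  have hA1 : 1 < A := Real.one_lt_rpow_iff_of_pos hy0 |>.2 (Or.inl ⟨hy, ha1⟩)
  have hB1 : 1 < B := Real.one_lt_rpow_iff_of_pos hy0 |>.2 (Or.inl ⟨hy, hb1⟩)
  have hpA : y ^ a = y * A := by
    rw [hA, show a = 1 + (a - 1) by ring, Real.rpow_add hy0, Real.rpow_one]
    ring_nf
  have hpB : y ^ b = y * B := by
    rw [hB, show b = 1 + (b - 1) by ring, Real.rpow_add hy0, Real.rpow_one]
    ring_nf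
  rw [hpA, hpB]
  have hd1 : (0:ℝ) < y * A - 1 := by nlinarith
  have hd2 : (0:ℝ) < y * B - 1 := by nlinarith
  have hd3 : (0:ℝ) < y - 1 := by linarith
  rw [div_add_div _ _ hd1.ne' hd2.ne', div_lt_div_iff₀ (by positivity) hd3]
  nlinarith [hprod, mul_pos hd1 hd2, mul_pos hy0 hy0]

theorem stmt6 (y β : ℝ) (hy : 1 < y) (hβ : 0 ≤ β)
    (H : ℝ → ℝ) (hH : ∀ u, H u = 1 / (y ^ (β / u) * (y ^ (1 / u) - 1))) :
    ∀ u ∈ Set.Ioo (0 : ℝ) 1, H u + H (1 - u) < H 1 := by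
  rintro u ⟨hu0, hu1⟩
  have hy0 : (0:ℝ) < y := by linarith
  have hv0 : (0:ℝ) < 1 - u := by linarith
  set a := 1/u with ha'
  set b := 1/(1-u) with hb'
  have ha : 1 < a := one_lt_one_div hu0 hu1
  have hb : 1 < b := one_lt_one_div hv0 (by linarith)
  have hab : a + b = a * b := by
    rw [ha', hb']; field_simp; ring
  have hkey := key2 y hy a b ha hb hab
  have hβpow : (0:ℝ) < y ^ β := Real.rpow_pos_of_pos hy0 _
  have hH1 : H 1 = 1/y^β * (1/(y - 1)) := by
    rw [hH 1]
    norm_num [Real.rpow_one]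
    ring
  have hda : (0:ℝ) < y ^ a - 1 := by
    have : 1 < y ^ a := Real.one_lt_rpow_iff_of_pos hy0 |>.2 (Or.inl ⟨hy, by linarith⟩)
    linarith
  have hdb : (0:ℝ) < y ^ b - 1 := by
    have : 1 < y ^ b := Real.one_lt_rpow_iff_of_pos hy0 |>.2 (Or.inl ⟨hy, by linarith⟩)
    linarith
  have hbound : ∀ v : ℝ, 0 < v → v < 1 → H v ≤ 1/y^β * (1/(y ^ (1/v) - 1)) := by
    intro v hv0' hv1'
    have hdv : (0:ℝ) < y ^ (1/v) - 1 := by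
      have h1v : (0:ℝ) < 1/v := by positivity
      have : 1 < y ^ (1/v) := Real.one_lt_rpow_iff_of_pos hy0 |>.2 (Or.inl ⟨hy, h1v⟩)
      linarith
    rw [hH v]
    have hexp : β ≤ β / v := by
      rw [le_div_iff₀ hv0']; nlinarith
    have hpow : y ^ β ≤ y ^ (β / v) := Real.rpow_le_rpow_left_iff hy |>.2 hexp
    rw [one_div, mul_inv, ← one_div, ← one_div]
    have h2 : 1 / y ^ (β / v) ≤ 1 / y ^ β :=
      one_div_le_one_div_of_le hβpow hpow
    exact mul_le_mul_of_nonneg_right h2 (by positivity) |>.trans_eq rfl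
  have h1 := hbound u hu0 hu1
  have h2 := hbound (1-u) hv0 (by linarith)
  have h1u : 1/(1-u) = b := rfl
  rw [h1u] at h2
  have hmul : 1/y^β * (1/(y ^ a - 1)) + 1/y^β * (1/(y ^ b - 1)) < 1/y^β * (1/(y-1)) := by
    rw [← mul_add]
    exact mul_lt_mul_of_pos_left hkey (by positivity)
  rw [hH1]
  calc H u + H (1-u) ≤ 1/y^β * (1/(y ^ a - 1)) + 1/y^β * (1/(y ^ b - 1)) := by
        exact add_le_add h1 h2
    _ < 1/y^β * (1/(y-1)) := hmul
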